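/- For every nonnegative integer n, (-1)^n * Q_2(n) = b_{4,e}(n) - b_{4,o}(n), where Q_2(n) counts partitions of n into distinct parts not congruent to 2 mod 4, and b_{4,e}(n) (resp. b_{4,o}(n)) counts 4-regular partitions of n with an even (resp. odd) number of parts. -/

import Mathlib

/-! Euler's partition theorem, copied verbatim from mathlib's
`Archive/Wiedijk100Theorems/Partition.lean` (same mathlib commit), since the
Archive is not part of the `Mathlib` import. -/

/-!
# Euler's Partition Theorem

This file proves Theorem 45 from the [100 Theorems List](https://www.cs.ru.nl/~freek/100/).

The theorem concerns the counting of integer partitions -- ways of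
writing a positive integer `n` as a sum of positive integer parts.

Specifically, Euler proved that the number of integer partitions of `n`
into *distinct* parts equals the number of partitions of `n` into *odd*
parts.

## Proof outline

The proof is based on the generating functions for odd and distinct partitions, which turn out to be
equal:

$$\prod_{i=0}^\infty \frac {1}{1-X^{2i+1}} = \prod_{i=0}^\infty (1+X^{i+1})$$

In fact, we do not take a limit: it turns out that comparing the `n`'th coefficients of the partial
products up to `m := n + 1` is sufficient.

In particular, we

1. define the partial product for the generating function for odd partitions `partialOddGF m` :=
  $$\prod_{i=0}^m \frac {1}{1-X^{2i+1}}$$;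
2. prove `oddGF_prop`: if `m` is big enough (`m * 2 > n`), the partial product's coefficient counts
  the number of odd partitions;
3. define the partial product for the generating function for distinct partitions
  `partialDistinctGF m` := $$\prod_{i=0}^m (1+X^{i+1})$$;
4. prove `distinctGF_prop`: if `m` is big enough (`m + 1 > n`), the `n`th coefficient of the
  partial product counts the number of distinct partitions of `n`;
5. prove `same_coeffs`: if m is big enough (`m ≥ n`), the `n`th coefficient of the partial products
  are equal;
6. combine the above in `partition_theorem`.

## References
https://en.wikipedia.org/wiki/Partition_(number_theory)#Odd_parts_and_distinct_parts
-/


open PowerSeries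

namespace Theorems100

noncomputable section

variable {α : Type*}

open Finset

open scoped Classical

/-- The partial product for the generating function for odd partitions.
TODO: As `m` tends to infinity, this converges (in the `X`-adic topology).

If `m` is sufficiently large, the `i`th coefficient gives the number of odd partitions of the
natural number `i`: proved in `oddGF_prop`.
It is stated for an arbitrary field `α`, though it usually suffices to use `ℚ` or `ℝ`.
-/
def partialOddGF (m : ℕ) [Field α] :=
  ∏ i ∈ range m, (1 - (X : PowerSeries α) ^ (2 * i + 1))⁻¹

/-- The partial product for the generating function for distinct partitions.
TODO: As `m` tends to infinity, this converges (in the `X`-adic topology).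

If `m` is sufficiently large, the `i`th coefficient gives the number of distinct partitions of the
natural number `i`: proved in `distinctGF_prop`.
It is stated for an arbitrary commutative semiring `α`, though it usually suffices to use `ℕ`, `ℚ`
or `ℝ`.
-/
def partialDistinctGF (m : ℕ) [CommSemiring α] :=
  ∏ i ∈ range m, (1 + (X : PowerSeries α) ^ (i + 1))

open Finset.HasAntidiagonal

universe u
variable {ι : Type u}

/-- A convenience constructor for the power series whose coefficients indicate a subset. -/
def indicatorSeries (α : Type*) [Semiring α] (s : Set ℕ) : PowerSeries α :=
  PowerSeries.mk fun n => if n ∈ s then 1 else 0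

theorem coeff_indicator (s : Set ℕ) [Semiring α] (n : ℕ) :
    coeff (R := α) n (indicatorSeries _ s) = if n ∈ s then 1 else 0 :=
  coeff_mk _ _

theorem coeff_indicator_pos (s : Set ℕ) [Semiring α] (n : ℕ) (h : n ∈ s) :
    coeff (R := α) n (indicatorSeries _ s) = 1 := by rw [coeff_indicator, if_pos h]

theorem coeff_indicator_neg (s : Set ℕ) [Semiring α] (n : ℕ) (h : n ∉ s) :
    coeff (R := α) n (indicatorSeries _ s) = 0 := by rw [coeff_indicator, if_neg h]

theorem constantCoeff_indicator (s : Set ℕ) [Semiring α] :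
    constantCoeff (R := α) (indicatorSeries _ s) = if 0 ∈ s then 1 else 0 :=
  rfl

theorem two_series (i : ℕ) [Semiring α] :
    1 + (X : PowerSeries α) ^ i.succ = indicatorSeries α {0, i.succ} := by
  ext n
  simp only [coeff_indicator, coeff_one, coeff_X_pow, Set.mem_insert_iff, Set.mem_singleton_iff,
    map_add]
  cases' n with d
  · simp [(Nat.succ_ne_zero i).symm]
  · simp [Nat.succ_ne_zero d]

theorem num_series' [Field α] (i : ℕ) :
    (1 - (X : PowerSeries α) ^ (i + 1))⁻¹ = indicatorSeries α {k | i + 1 ∣ k} := by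
  rw [PowerSeries.inv_eq_iff_mul_eq_one]
  · ext n
    cases n with
    | zero => simp [mul_sub, zero_pow, constantCoeff_indicator]
    | succ n =>
      simp only [coeff_one, if_false, mul_sub, mul_one, coeff_indicator,
        LinearMap.map_sub, reduceCtorEq]
      simp_rw [coeff_mul, coeff_X_pow, coeff_indicator, @boole_mul _ _ _ _]
      simp only [Set.mem_setOf_eq]
      erw [sum_ite, sum_ite]
      simp_rw [@filter_filter _ _ _ _ _, sum_const_zero, add_zero, sum_const, nsmul_eq_mul, mul_one,
        sub_eq_iff_eq_add, zero_add]
      symm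
      split_ifs with h
      · suffices #{a ∈ antidiagonal (n + 1) | i + 1 ∣ a.fst ∧ a.snd = i + 1} = 1 by
          convert congr_arg ((↑) : ℕ → α) this; norm_cast
        rw [card_eq_one]
        cases' h with p hp
        refine ⟨((i + 1) * (p - 1), i + 1), ?_⟩
        ext ⟨a₁, a₂⟩
        simp only [mem_filter, Prod.mk_inj, HasAntidiagonal.mem_antidiagonal, mem_singleton]
        constructor
        · rintro ⟨a_left, ⟨a, rfl⟩, rfl⟩
          refine ⟨?_, rfl⟩
          rw [Nat.mul_sub_left_distrib, ← hp, ← a_left, mul_one, Nat.add_sub_cancel]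
        · rintro ⟨rfl, rfl⟩
          match p with
          | 0 => rw [mul_zero] at hp; cases hp
          | p + 1 => rw [hp]; simp [mul_add]
      · suffices #{a ∈ antidiagonal (n + 1) | i + 1 ∣ a.fst ∧ a.snd = i + 1} = 0 by
          convert congr_arg ((↑) : ℕ → α) this; norm_cast
        rw [card_eq_zero]
        apply eq_empty_of_forall_notMem
        simp only [Prod.forall, mem_filter, not_and, HasAntidiagonal.mem_antidiagonal]
        rintro _ h₁ h₂ ⟨a, rfl⟩ rfl
        apply h
        simp [← h₂]
  · simp [zero_pow]

def mkOdd : ℕ ↪ ℕ :=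
  ⟨fun i => 2 * i + 1, fun x y h => by linarith⟩

-- The main workhorse of the partition theorem proof.
theorem partialGF_prop (α : Type*) [CommSemiring α] (n : ℕ) (s : Finset ℕ) (hs : ∀ i ∈ s, 0 < i)
    (c : ℕ → Set ℕ) (hc : ∀ i, i ∉ s → 0 ∈ c i) :
    #{p : n.Partition | (∀ j, p.parts.count j ∈ c j) ∧ ∀ j ∈ p.parts, j ∈ s} =
      coeff (R := α) n (∏ i ∈ s, indicatorSeries α ((· * i) '' c i)) := by
  simp_rw [coeff_prod, coeff_indicator, prod_boole, sum_boole]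
  apply congr_arg
  simp only [mem_univ, forall_true_left, not_and, not_forall, exists_prop,
    Set.mem_image, not_exists]
  set φ : (a : Nat.Partition n) →
    a ∈ filter (fun p ↦ (∀ (j : ℕ), Multiset.count j p.parts ∈ c j) ∧ ∀ j ∈ p.parts, j ∈ s) univ →
    ℕ →₀ ℕ := fun p _ => {
      toFun := fun i => Multiset.count i p.parts • i
      support := Finset.filter (fun i => i ≠ 0) p.parts.toFinset
      mem_support_toFun := fun a => by
        simp only [smul_eq_mul, ne_eq, mul_eq_zero, Multiset.count_eq_zero]
        rw [not_or, not_not]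
        simp only [Multiset.mem_toFinset, not_not, mem_filter] }
  refine Finset.card_bij φ ?_ ?_ ?_
  · intro a ha
    simp only [φ, not_forall, not_exists, not_and, exists_prop, mem_filter]
    rw [mem_finsuppAntidiag]
    dsimp only [ne_eq, smul_eq_mul, id_eq, eq_mpr_eq_cast, le_eq_subset, Finsupp.coe_mk]
    simp only [mem_univ, forall_true_left, not_and, not_forall, exists_prop,
      mem_filter, true_and] at ha
    refine ⟨⟨?_, fun i ↦ ?_⟩, fun i _ ↦ ⟨a.parts.count i, ha.1 i, rfl⟩⟩
    · conv_rhs => simp [← a.parts_sum]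
      rw [sum_multiset_count_of_subset _ s]
      · simp only [smul_eq_mul]
      · intro i
        simp only [Multiset.mem_toFinset, not_not, mem_filter]
        apply ha.2
    · simp only [ne_eq, Multiset.mem_toFinset, not_not, mem_filter, and_imp]
      exact fun hi _ ↦ ha.2 i hi
  · intro p₁ hp₁ p₂ hp₂ h
    apply Nat.Partition.ext
    simp only [true_and, mem_univ, mem_filter] at hp₁ hp₂
    ext i
    simp only [φ, ne_eq, Multiset.mem_toFinset, not_not, smul_eq_mul, Finsupp.mk.injEq] at h
    by_cases hi : i = 0
    · rw [hi]
      rw [Multiset.count_eq_zero_of_notMem]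
      · rw [Multiset.count_eq_zero_of_notMem]
        intro a; exact Nat.lt_irrefl 0 (hs 0 (hp₂.2 0 a))
      intro a; exact Nat.lt_irrefl 0 (hs 0 (hp₁.2 0 a))
    · rw [← mul_left_inj' hi]
      rw [funext_iff] at h
      exact h.2 i
  · simp only [φ, mem_filter, mem_finsuppAntidiag, mem_univ, exists_prop, true_and, and_assoc]
    rintro f ⟨hf, hf₃, hf₄⟩
    have hf' : f ∈ finsuppAntidiag s n := mem_finsuppAntidiag.mpr ⟨hf, hf₃⟩
    simp only [mem_finsuppAntidiag] at hf'
    refine ⟨⟨∑ i ∈ s, Multiset.replicate (f i / i) i, ?_, ?_⟩, ?_, ?_, ?_⟩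
    · intro i hi
      simp only [exists_prop, Multiset.mem_sum, mem_map, Function.Embedding.coeFn_mk] at hi
      rcases hi with ⟨t, ht, z⟩
      apply hs
      rwa [Multiset.eq_of_mem_replicate z]
    · simp_rw [Multiset.sum_sum, Multiset.sum_replicate, Nat.nsmul_eq_mul]
      rw [← hf'.1]
      refine sum_congr rfl fun i hi => Nat.div_mul_cancel ?_
      rcases hf₄ i hi with ⟨w, _, hw₂⟩
      rw [← hw₂]
      exact dvd_mul_left _ _
    · intro i
      simp_rw [Multiset.count_sum', Multiset.count_replicate, sum_ite_eq']
      split_ifs with h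
      · rcases hf₄ i h with ⟨w, hw₁, hw₂⟩
        rwa [← hw₂, Nat.mul_div_cancel _ (hs i h)]
      · exact hc _ h
    · intro i hi
      rw [Multiset.mem_sum] at hi
      rcases hi with ⟨j, hj₁, hj₂⟩
      rwa [Multiset.eq_of_mem_replicate hj₂]
    · ext i
      simp_rw [Multiset.count_sum', Multiset.count_replicate, sum_ite_eq']
      simp only [ne_eq, Multiset.mem_toFinset, not_not, smul_eq_mul, ite_mul,
        zero_mul, Finsupp.coe_mk]
      split_ifs with h
      · apply Nat.div_mul_cancel
        rcases hf₄ i h with ⟨w, _, hw₂⟩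
        apply Dvd.intro_left _ hw₂
      · apply symm
        rw [← Finsupp.notMem_support_iff]
        exact notMem_mono hf'.2 h

theorem partialOddGF_prop [Field α] (n m : ℕ) :
    #{p : n.Partition | ∀ j ∈ p.parts, j ∈ (range m).map mkOdd} = coeff (R := α) n (partialOddGF m) := by
  rw [partialOddGF]
  convert partialGF_prop α n
    ((range m).map mkOdd) _ (fun _ => Set.univ) (fun _ _ => trivial) using 2
  · congr
    simp only [true_and, forall_const, Set.mem_univ]
  · rw [Finset.prod_map]
    simp_rw [num_series']
    congr! 2 with x
    ext k
    constructor
    · rintro ⟨p, rfl⟩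
      refine ⟨p, ⟨⟩, ?_⟩
      apply mul_comm
    rintro ⟨a_w, -, rfl⟩
    apply Dvd.intro_left a_w rfl
  · intro i
    rw [mem_map]
    rintro ⟨a, -, rfl⟩
    exact Nat.succ_pos _

/-- If m is big enough, the partial product's coefficient counts the number of odd partitions -/
theorem oddGF_prop [Field α] (n m : ℕ) (h : n < m * 2) :
    #(Nat.Partition.odds n) = coeff (R := α) n (partialOddGF m) := by
  rw [← partialOddGF_prop, Nat.Partition.odds, Nat.Partition.restricted]
  congr with p
  apply forall₂_congr
  intro i hi
  have hin : i ≤ n := by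
    simpa [p.parts_sum] using Multiset.single_le_sum (fun _ _ => Nat.zero_le _) _ hi
  simp only [mkOdd, exists_prop, mem_range, Function.Embedding.coeFn_mk, mem_map]
  constructor
  · intro hi₂
    have := Nat.mod_add_div i 2
    rw [Nat.not_even_iff] at hi₂
    rw [hi₂, add_comm] at this
    refine ⟨i / 2, ?_, this⟩
    rw [Nat.div_lt_iff_lt_mul zero_lt_two]
    exact lt_of_le_of_lt hin h
  · rintro ⟨a, -, rfl⟩
    rw [even_iff_two_dvd]
    apply Nat.two_not_dvd_two_mul_add_one

theorem partialDistinctGF_prop [CommSemiring α] (n m : ℕ) :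
    #{p : n.Partition |
        p.parts.Nodup ∧ ∀ j ∈ p.parts, j ∈ (range m).map ⟨Nat.succ, Nat.succ_injective⟩} =
      coeff (R := α) n (partialDistinctGF m) := by
  rw [partialDistinctGF]
  convert partialGF_prop α n
    ((range m).map ⟨Nat.succ, Nat.succ_injective⟩) _ (fun _ => {0, 1}) (fun _ _ => Or.inl rfl)
    using 2
  · congr! with p
    rw [Multiset.nodup_iff_count_le_one]
    congr! 1 with i
    rcases Multiset.count i p.parts with (_ | _ | ms) <;> simp
  · simp_rw [Finset.prod_map, two_series]
    congr with i
    simp [Set.image_pair]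
  · simp only [mem_map, Function.Embedding.coeFn_mk]
    rintro i ⟨_, _, rfl⟩
    apply Nat.succ_pos

/-- If m is big enough, the partial product's coefficient counts the number of distinct partitions
-/
theorem distinctGF_prop [CommSemiring α] (n m : ℕ) (h : n < m + 1) :
    #(Nat.Partition.distincts n) = coeff (R := α) n (partialDistinctGF m) := by
  rw [← partialDistinctGF_prop, Nat.Partition.distincts]
  congr with p
  apply (and_iff_left _).symm
  intro i hi
  have : i ≤ n := by
    simpa [p.parts_sum] using Multiset.single_le_sum (fun _ _ => Nat.zero_le _) _ hi
  simp only [mkOdd, exists_prop, mem_range, Function.Embedding.coeFn_mk, mem_map]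
  refine ⟨i - 1, ?_, Nat.succ_pred_eq_of_pos (p.parts_pos hi)⟩
  rw [tsub_lt_iff_right (Nat.one_le_iff_ne_zero.mpr (p.parts_pos hi).ne')]
  exact lt_of_le_of_lt this h

/-- The key proof idea for the partition theorem, showing that the generating functions for both
sequences are ultimately the same (since the factor converges to 0 as m tends to infinity).
It's enough to not take the limit though, and just consider large enough `m`.
-/
theorem same_gf [Field α] (m : ℕ) :
    (partialOddGF m * (range m).prod fun i => 1 - (X : PowerSeries α) ^ (m + i + 1)) =
      partialDistinctGF m := by
  rw [partialOddGF, partialDistinctGF]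
  induction' m with m ih
  · simp
  set! π₀ : PowerSeries α := ∏ i ∈ range m, (1 - X ^ (m + 1 + i + 1)) with hπ₀
  set! π₁ : PowerSeries α := ∏ i ∈ range m, (1 - X ^ (2 * i + 1))⁻¹ with hπ₁
  set! π₂ : PowerSeries α := ∏ i ∈ range m, (1 - X ^ (m + i + 1)) with hπ₂
  set! π₃ : PowerSeries α := ∏ i ∈ range m, (1 + X ^ (i + 1)) with hπ₃
  rw [← hπ₃] at ih
  have h : constantCoeff (R := α) (1 - X ^ (2 * m + 1)) ≠ 0 := by
    rw [RingHom.map_sub, RingHom.map_pow, constantCoeff_one, constantCoeff_X,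
      zero_pow (2 * m).succ_ne_zero, sub_zero]
    exact one_ne_zero
  calc
    (∏ i ∈ range (m + 1), (1 - X ^ (2 * i + 1))⁻¹) *
          ∏ i ∈ range (m + 1), (1 - X ^ (m + 1 + i + 1)) =
        π₁ * (1 - X ^ (2 * m + 1))⁻¹ * (π₀ * (1 - X ^ (m + 1 + m + 1))) := by
      rw [prod_range_succ _ m, ← hπ₁, prod_range_succ _ m, ← hπ₀]
    _ = π₁ * (1 - X ^ (2 * m + 1))⁻¹ * (π₀ * ((1 + X ^ (m + 1)) * (1 - X ^ (m + 1)))) := by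
      rw [← sq_sub_sq, one_pow, add_assoc _ m 1, ← two_mul (m + 1), pow_mul']
    _ = π₀ * (1 - X ^ (m + 1)) * (1 - X ^ (2 * m + 1))⁻¹ * (π₁ * (1 + X ^ (m + 1))) := by ring
    _ =
        (∏ i ∈ range (m + 1), (1 - X ^ (m + 1 + i))) * (1 - X ^ (2 * m + 1))⁻¹ *
          (π₁ * (1 + X ^ (m + 1))) := by
      rw [prod_range_succ', add_zero, hπ₀]; simp_rw [← add_assoc]
    _ = π₂ * (1 - X ^ (m + 1 + m)) * (1 - X ^ (2 * m + 1))⁻¹ * (π₁ * (1 + X ^ (m + 1))) := by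
      rw [add_right_comm, hπ₂, ← prod_range_succ]; simp_rw [add_right_comm]
    _ = π₂ * (1 - X ^ (2 * m + 1)) * (1 - X ^ (2 * m + 1))⁻¹ * (π₁ * (1 + X ^ (m + 1))) := by
      rw [two_mul, add_right_comm _ m 1]
    _ = (1 - X ^ (2 * m + 1)) * (1 - X ^ (2 * m + 1))⁻¹ * π₂ * (π₁ * (1 + X ^ (m + 1))) := by ring
    _ = π₂ * (π₁ * (1 + X ^ (m + 1))) := by rw [PowerSeries.mul_inv_cancel _ h, one_mul]
    _ = π₁ * π₂ * (1 + X ^ (m + 1)) := by ring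
    _ = π₃ * (1 + X ^ (m + 1)) := by rw [ih]
    _ = _ := by rw [prod_range_succ]

theorem same_coeffs [Field α] (m n : ℕ) (h : n ≤ m) :
    coeff (R := α) n (partialOddGF m) = coeff (R := α) n (partialDistinctGF m) := by
  rw [← same_gf, coeff_mul_prod_one_sub_of_lt_order]
  rintro i -
  rw [order_X_pow]
  exact mod_cast Nat.lt_succ_of_le (le_add_right h)

theorem partition_theorem (n : ℕ) : #(Nat.Partition.odds n) = #(Nat.Partition.distincts n) := by
  suffices (#(Nat.Partition.odds n) : ℚ) = #(Nat.Partition.distincts n) from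
    mod_cast this
  rw [distinctGF_prop n (n + 1) (by linarith)]
  rw [oddGF_prop n (n + 1) (by linarith)]
  apply same_coeffs (n + 1) n n.le_succ

end

end Theorems100



/-- `Q2 n`: number of partitions of `n` into distinct parts none ≡ 2 (mod 4). -/
noncomputable def Q2 (n : ℕ) : ℕ :=
  Nat.card {p : n.Partition // p.parts.Nodup ∧ ∀ x ∈ p.parts, x % 4 ≠ 2}

/-- `b4E n`: 4-regular partitions of `n` with an even number of parts. -/
noncomputable def b4E (n : ℕ) : ℕ :=
  Nat.card {p : n.Partition // Even (Multiset.card p.parts) ∧ ∀ x ∈ p.parts, ¬ (4 ∣ x)}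

/-- `b4O n`: 4-regular partitions of `n` with an odd number of parts. -/
noncomputable def b4O (n : ℕ) : ℕ :=
  Nat.card {p : n.Partition // Odd (Multiset.card p.parts) ∧ ∀ x ∈ p.parts, ¬ (4 ∣ x)}

open Finset Multiset



namespace Step1

def bad (m : Multiset ℕ) (j : ℕ) : Prop :=
  j % 2 = 1 ∧ (2 ≤ m.count j ∨ m.count (2*j) % 2 = 1)

instance (m : Multiset ℕ) : DecidablePred (bad m) := fun j =>
  inferInstanceAs (Decidable (j % 2 = 1 ∧ (2 ≤ m.count j ∨ m.count (2*j) % 2 = 1)))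

def moveAux (m : Multiset ℕ) (j : ℕ) : Multiset ℕ :=
  if m.count (2 * j) % 2 = 1 then j ::ₘ j ::ₘ m.erase (2 * j)
  else 2 * j ::ₘ (m.erase j).erase j

noncomputable def move (m : Multiset ℕ) (h : ∃ j, bad m j) : Multiset ℕ :=
  moveAux m (Nat.find h)

section Aux

variable {m : Multiset ℕ} {j : ℕ} (hj : bad m j)
include hj

lemma hodd' : j % 2 = 1 := hj.1

lemma moveAux_mem : ∀ x ∈ moveAux m j, x = j ∨ x = 2 * j ∨ x ∈ m := by
  intro x hx
  rw [moveAux] at hx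
  split at hx
  · rcases Multiset.mem_cons.1 hx with h1 | hx
    · exact Or.inl h1
    rcases Multiset.mem_cons.1 hx with h1 | hx
    · exact Or.inl h1
    · exact Or.inr (Or.inr (Multiset.mem_of_mem_erase hx))
  · rcases Multiset.mem_cons.1 hx with h1 | hx
    · exact Or.inr (Or.inl h1)
    · exact Or.inr (Or.inr (Multiset.mem_of_mem_erase (Multiset.mem_of_mem_erase hx)))

lemma splitCase (hb : m.count (2*j) % 2 = 1) :
    2*j ∈ m ∧ 2*j ::ₘ m.erase (2*j) = m := by
  have hmem : 2 * j ∈ m := by rw [← Multiset.count_pos]; omega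
  exact ⟨hmem, Multiset.cons_erase hmem⟩

lemma mergeCase (hb : ¬ m.count (2*j) % 2 = 1) :
    j ∈ m ∧ j ∈ m.erase j ∧ j ::ₘ j ::ₘ (m.erase j).erase j = m := by
  have ha : 2 ≤ m.count j := by rcases hj.2 with h1 | h1 <;> omega
  have hm1 : j ∈ m.erase j := by
    rw [← Multiset.count_pos, Multiset.count_erase_self]; omega
  have hm0 : j ∈ m := by rw [← Multiset.count_pos]; omega
  exact ⟨hm0, hm1, by rw [Multiset.cons_erase hm1, Multiset.cons_erase hm0]⟩

lemma moveAux_sum : (moveAux m j).sum = m.sum := by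
  rw [moveAux]
  split
  · rename_i hb
    have hc := (splitCase hj hb).2
    have := congrArg Multiset.sum hc
    rw [Multiset.sum_cons] at this
    simp only [Multiset.sum_cons]
    omega
  · rename_i hb
    have hc := (mergeCase hj hb).2.2
    have := congrArg Multiset.sum hc
    simp only [Multiset.sum_cons] at this ⊢
    omega

lemma moveAux_card : Multiset.card (moveAux m j) % 2 ≠ Multiset.card m % 2 := by
  rw [moveAux]
  split
  · rename_i hb
    have hc := (splitCase hj hb).2
    have := congrArg (fun s => Multiset.card s) hc
    simp only [Multiset.card_cons] at this ⊢
    omega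
  · rename_i hb
    have hc := (mergeCase hj hb).2.2
    have := congrArg (fun s => Multiset.card s) hc
    simp only [Multiset.card_cons] at this ⊢
    omega

lemma moveAux_counts :
    ∀ k, k ≠ j → k ≠ 2 * j → (moveAux m j).count k = m.count k := by
  intro k hk1 hk2
  rw [moveAux]
  split
  · rw [Multiset.count_cons_of_ne hk1, Multiset.count_cons_of_ne hk1,
      Multiset.count_erase_of_ne hk2]
  · rw [Multiset.count_cons_of_ne hk2, Multiset.count_erase_of_ne hk1,
      Multiset.count_erase_of_ne hk1]

lemma bad_moveAux : bad (moveAux m j) j := by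
  have hodd : j % 2 = 1 := hj.1
  have hne : j ≠ 2 * j := by omega
  refine ⟨hodd, ?_⟩
  rw [moveAux]
  split
  · left
    rw [Multiset.count_cons_self, Multiset.count_cons_self]
    omega
  · rename_i hb
    right
    rw [Multiset.count_cons_self, Multiset.count_erase_of_ne (by omega),
      Multiset.count_erase_of_ne (by omega)]
    omega

lemma moveAux_moveAux : moveAux (moveAux m j) j = m := by
  have hodd : j % 2 = 1 := hj.1
  have hne : j ≠ 2 * j := by omega
  rcases eq_or_ne (m.count (2*j) % 2) 1 with hb | hb
  · obtain ⟨hmem, -⟩ := splitCase hj hb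
    have hmv : moveAux m j = j ::ₘ j ::ₘ m.erase (2*j) := by rw [moveAux, if_pos hb]
    have hcount : (moveAux m j).count (2*j) = m.count (2*j) - 1 := by
      rw [hmv, Multiset.count_cons_of_ne (Ne.symm hne), Multiset.count_cons_of_ne (Ne.symm hne),
        Multiset.count_erase_self]
    rw [moveAux, if_neg (by rw [hcount]; omega), hmv]
    rw [Multiset.erase_cons_head, Multiset.erase_cons_head]
    exact Multiset.cons_erase hmem
  · obtain ⟨hm0, hm1, -⟩ := mergeCase hj hb
    have hmv : moveAux m j = 2*j ::ₘ (m.erase j).erase j := by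
      rw [moveAux, if_neg hb]
    have hcount : (moveAux m j).count (2*j) = m.count (2*j) + 1 := by
      rw [hmv, Multiset.count_cons_self, Multiset.count_erase_of_ne (Ne.symm hne),
        Multiset.count_erase_of_ne (Ne.symm hne)]
    rw [moveAux, if_pos (by rw [hcount]; omega), hmv]
    rw [Multiset.erase_cons_head]
    rw [Multiset.cons_erase hm1, Multiset.cons_erase hm0]

end Aux

lemma find_move (m : Multiset ℕ) (h : ∃ j, bad m j) (h' : ∃ j, bad (move m h) j) :
    Nat.find h' = Nat.find h := by
  have hj : bad m (Nat.find h) := Nat.find_spec h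
  have hodd : Nat.find h % 2 = 1 := hj.1
  rw [Nat.find_eq_iff]
  refine ⟨bad_moveAux hj, fun k hk hbad => ?_⟩
  have hk1 : k ≠ Nat.find h := by omega
  have hk2 : k ≠ 2 * Nat.find h := by omega
  have hk3 : 2 * k ≠ Nat.find h := by
    have := hbad.1; omega
  have hk4 : 2 * k ≠ 2 * Nat.find h := by omega
  refine Nat.find_min h hk ⟨hbad.1, ?_⟩
  have e1 := moveAux_counts hj k hk1 hk2
  have e2 := moveAux_counts hj (2*k) hk3 hk4
  have hbad' : bad (moveAux m (Nat.find h)) k := hbad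
  rw [← e1, ← e2]
  exact hbad'.2

lemma move_move (m : Multiset ℕ) (h : ∃ j, bad m j) (h' : ∃ j, bad (move m h) j) :
    move (move m h) h' = m := by
  have e : move (move m h) h' = moveAux (moveAux m (Nat.find h)) (Nat.find h') := rfl
  rw [e, find_move m h h', moveAux_moveAux (Nat.find_spec h)]

end Step1
namespace Step1

def isfixed (m : Multiset ℕ) : Prop :=
  ∀ j ∈ m, (j % 2 = 1 → m.count j ≤ 1) ∧ (j % 2 = 0 → m.count j % 2 = 0)

instance (m : Multiset ℕ) : Decidable (isfixed m) := by
  unfold isfixed; infer_instance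

lemma isfixed_iff {m : Multiset ℕ} (hreg : ∀ x ∈ m, ¬ (4 ∣ x)) :
    isfixed m ↔ ¬ ∃ j, bad m j := by
  constructor
  · rintro hf ⟨j, hodd, hj⟩
    rcases hj with hj | hj
    · have hjm : j ∈ m := by rw [← Multiset.count_pos]; omega
      have := (hf j hjm).1 hodd
      omega
    · have hjm : 2*j ∈ m := by rw [← Multiset.count_pos]; omega
      have := (hf (2*j) hjm).2 (by omega)
      omega
  · intro hnb
    intro j hjm
    constructor
    · intro hodd
      by_contra hc
      exact hnb ⟨j, hodd, Or.inl (by omega)⟩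
    · intro heven
      have h4 : ¬ (4 ∣ j) := hreg j hjm
      have h4' : j % 4 ≠ 0 := fun hc => h4 (Nat.dvd_of_mod_eq_zero hc)
      have hodd2 : (j / 2) % 2 = 1 := by omega
      have hj2 : 2 * (j / 2) = j := by omega
      by_contra hc
      exact hnb ⟨j / 2, hodd2, Or.inr (by rw [hj2]; omega)⟩

lemma fixed_count {m : Multiset ℕ} (hnb : ¬ ∃ j, bad m j) (j : ℕ) (hodd : j % 2 = 1) :
    m.count j ≤ 1 ∧ m.count (2*j) % 2 = 0 := by
  constructor
  · by_contra hc; exact hnb ⟨j, hodd, Or.inl (by omega)⟩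
  · by_contra hc; exact hnb ⟨j, hodd, Or.inr (by omega)⟩

def R (n : ℕ) : Finset (n.Partition) := Finset.univ.filter fun p => ∀ x ∈ p.parts, ¬ (4 ∣ x)

def D (n : ℕ) : Finset (n.Partition) :=
  Finset.univ.filter fun p => p.parts.Nodup ∧ ∀ x ∈ p.parts, x % 4 ≠ 2

def Fx (n : ℕ) : Finset (n.Partition) := (R n).filter fun p => isfixed p.parts

lemma mem_R {n : ℕ} {p : n.Partition} : p ∈ R n ↔ ∀ x ∈ p.parts, ¬ (4 ∣ x) := by
  simp [R]

/-- The involution at the level of partitions. -/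
noncomputable def gP {n : ℕ} (p : n.Partition) (h : ∃ j, bad p.parts j) : n.Partition where
  parts := move p.parts h
  parts_pos := by
    intro x hx
    have hodd : Nat.find h % 2 = 1 := (Nat.find_spec h).1
    rcases moveAux_mem (Nat.find_spec h) x hx with rfl | rfl | hx
    · omega
    · omega
    · exact p.parts_pos hx
  parts_sum := (moveAux_sum (Nat.find_spec h)).trans p.parts_sum

lemma gP_reg {n : ℕ} (p : n.Partition) (h : ∃ j, bad p.parts j)
    (hreg : ∀ x ∈ p.parts, ¬ (4 ∣ x)) : ∀ x ∈ (gP p h).parts, ¬ (4 ∣ x) := by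
  intro x hx
  have hodd : Nat.find h % 2 = 1 := (Nat.find_spec h).1
  rcases moveAux_mem (Nat.find_spec h) x hx with rfl | rfl | hx
  · rintro ⟨c, hc⟩; omega
  · rintro ⟨c, hc⟩; omega
  · exact hreg x hx

lemma neg_one_pow_eq_of_parity {a b : ℕ} (hab : a % 2 = b % 2) :
    ((-1 : ℤ)) ^ a = (-1) ^ b := by
  rcases Nat.even_or_odd a with ha | ha
  · have hb : Even b := by
      rw [Nat.even_iff] at ha ⊢; omega
    rw [ha.neg_one_pow, hb.neg_one_pow]
  · have hb : Odd b := by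
      rw [Nat.odd_iff] at ha ⊢; omega
    rw [ha.neg_one_pow, hb.neg_one_pow]

lemma sum_parity (m : Multiset ℕ) :
    m.sum % 2 = (Multiset.card (m.filter (fun x => x % 2 = 1))) % 2 := by
  induction m using Multiset.induction_on with
  | empty => simp
  | cons a s ih =>
    rw [Multiset.sum_cons, Multiset.filter_cons]
    by_cases ha : a % 2 = 1
    · simp only [ha, if_pos, Multiset.card_add, Multiset.card_singleton]
      omega
    · simp only [ha, if_neg, Multiset.card_add, not_false_iff]
      simp only [Multiset.card_zero]
      omega

lemma even_card_of_even_counts (m : Multiset ℕ) (hc : ∀ a, m.count a % 2 = 0) :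
    Multiset.card m % 2 = 0 := by
  rw [← Multiset.toFinset_sum_count_eq, Finset.sum_nat_mod]
  rw [Finset.sum_congr rfl (fun a _ => hc a)]
  simp

lemma card_parity_of_fixed {n : ℕ} (p : n.Partition) (hreg : ∀ x ∈ p.parts, ¬ (4 ∣ x))
    (hf : isfixed p.parts) : Multiset.card p.parts % 2 = n % 2 := by
  have hnb := (isfixed_iff hreg).1 hf
  have hsplit : p.parts.filter (fun x => x % 2 = 1) +
      p.parts.filter (fun x => ¬ x % 2 = 1) = p.parts := Multiset.filter_add_not _ _
  have hcard := congrArg (fun s => Multiset.card s) hsplit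
  simp only [Multiset.card_add] at hcard
  have heven : Multiset.card (p.parts.filter (fun x => ¬ x % 2 = 1)) % 2 = 0 := by
    apply even_card_of_even_counts
    intro a
    rw [Multiset.count_filter]
    split
    · rename_i ha
      by_cases ham : a ∈ p.parts
      · have h4 : a % 4 ≠ 0 := fun hc => hreg a ham (Nat.dvd_of_mod_eq_zero hc)
        have hodd2 : (a / 2) % 2 = 1 := by omega
        have := (fixed_count hnb (a / 2) hodd2).2
        have h2 : 2 * (a / 2) = a := by omega
        rw [h2] at this
        exact this
      · rw [Multiset.count_eq_zero_of_notMem ham]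
    · rfl
  have hsum := sum_parity p.parts
  rw [p.parts_sum] at hsum
  omega

lemma sum_R_eq (n : ℕ) :
    ∑ p ∈ R n, (-1 : ℤ) ^ (Multiset.card p.parts) = (-1 : ℤ) ^ n * (Fx n).card := by
  rw [← Finset.sum_filter_add_sum_filter_not (R n) (fun p => isfixed p.parts)]
  have hzero : ∑ p ∈ (R n).filter (fun p => ¬ isfixed p.parts),
      (-1 : ℤ) ^ (Multiset.card p.parts) = 0 := by
    have hex : ∀ p ∈ (R n).filter (fun p => ¬ isfixed p.parts), ∃ j, bad p.parts j := by
      intro p hp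
      rw [Finset.mem_filter] at hp
      have hreg : ∀ x ∈ p.parts, ¬ (4 ∣ x) := mem_R.1 hp.1
      by_contra hc
      exact hp.2 ((isfixed_iff hreg).2 hc)
    refine Finset.sum_involution (fun p hp => gP p (hex p hp)) ?_ ?_ ?_ ?_
    · intro p hp
      have hcard := moveAux_card (Nat.find_spec (hex p hp))
      have : Multiset.card ((gP p (hex p hp)).parts) % 2 ≠ Multiset.card p.parts % 2 := hcard
      rcases Nat.even_or_odd (Multiset.card p.parts) with he | he
      · rw [he.neg_one_pow]
        have ho : Odd (Multiset.card ((gP p (hex p hp)).parts)) := by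
          rw [Nat.odd_iff]; rw [Nat.even_iff] at he; omega
        rw [ho.neg_one_pow]; ring
      · rw [he.neg_one_pow]
        have ho : Even (Multiset.card ((gP p (hex p hp)).parts)) := by
          rw [Nat.even_iff]; rw [Nat.odd_iff] at he; omega
        rw [ho.neg_one_pow]; ring
    · intro p hp _ hc
      have hc' : gP p (hex p hp) = p := hc
      have hcard := moveAux_card (Nat.find_spec (hex p hp))
      apply hcard
      have hparts : (gP p (hex p hp)).parts = p.parts := by rw [hc']
      have e : Multiset.card (moveAux p.parts (Nat.find (hex p hp))) =
          Multiset.card p.parts := congrArg Multiset.card hparts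
      rw [e]
    · intro p hp
      have hreg : ∀ x ∈ p.parts, ¬ (4 ∣ x) := mem_R.1 (Finset.mem_filter.1 hp).1
      have hreg' := gP_reg p (hex p hp) hreg
      rw [Finset.mem_filter]
      refine ⟨mem_R.2 hreg', ?_⟩
      intro hfix
      exact ((isfixed_iff hreg').1 hfix)
        ⟨Nat.find (hex p hp), bad_moveAux (Nat.find_spec (hex p hp))⟩
    · intro p hp
      apply Nat.Partition.ext
      exact move_move p.parts (hex p hp) _
  rw [hzero, add_zero]
  have hconst : ∀ p ∈ (R n).filter (fun p => isfixed p.parts),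
      (-1 : ℤ) ^ (Multiset.card p.parts) = (-1 : ℤ) ^ n := by
    intro p hp
    have hp' := Finset.mem_filter.1 hp
    exact neg_one_pow_eq_of_parity
      (card_parity_of_fixed p (mem_R.1 hp'.1) hp'.2)
  rw [Finset.sum_congr rfl hconst, Finset.sum_const, Fx]
  simp [mul_comm]

end Step1
namespace Step1

lemma two_mul_inj : Function.Injective (fun x : ℕ => 2 * x) := fun a b h => by
  simpa using h

lemma four_mul_inj : Function.Injective (fun x : ℕ => 4 * x) := fun a b h => by
  simpa using h

lemma count_map_two (w : Multiset ℕ) (x : ℕ) :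
    (w.map (fun y => 2 * y)).count (2 * x) = w.count x :=
  Multiset.count_map_eq_count' _ _ two_mul_inj x

lemma count_map_four (w : Multiset ℕ) (x : ℕ) :
    (w.map (fun y => 4 * y)).count (4 * x) = w.count x :=
  Multiset.count_map_eq_count' _ _ four_mul_inj x

lemma count_map_two_odd (w : Multiset ℕ) (k : ℕ) (hk : k % 2 = 1) :
    (w.map (fun y => 2 * y)).count k = 0 := by
  rw [Multiset.count_eq_zero]
  intro hmem
  obtain ⟨y, -, hy⟩ := Multiset.mem_map.1 hmem
  omega

lemma count_map_four_odd (w : Multiset ℕ) (k : ℕ) (hk : k % 2 = 1) :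
    (w.map (fun y => 4 * y)).count k = 0 := by
  rw [Multiset.count_eq_zero]
  intro hmem
  obtain ⟨y, -, hy⟩ := Multiset.mem_map.1 hmem
  omega

lemma count_odd_multiset {w : Multiset ℕ} (hw : ∀ x ∈ w, x % 2 = 1) (k : ℕ)
    (hk : k % 2 = 0) : w.count k = 0 := by
  rw [Multiset.count_eq_zero]
  intro hmem
  have := hw k hmem
  omega

lemma sum_map_mul (b : ℕ) (w : Multiset ℕ) :
    (w.map (fun y => b * y)).sum = b * w.sum := by
  induction w using Multiset.induction_on with
  | empty => simp
  | cons a s ih => simp [Multiset.sum_cons, mul_add, ih]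

lemma exists_half (e : Multiset ℕ) (he : ∀ a, e.count a % 2 = 0) :
    ∃ u : Multiset ℕ, e = u + u := by
  induction e using Multiset.strongInductionOn with
  | ih e ih =>
    rcases Multiset.empty_or_exists_mem e with rfl | ⟨a, ha⟩
    · exact ⟨0, rfl⟩
    · have hc : 2 ≤ e.count a := by
        have h1 : 0 < e.count a := Multiset.count_pos.2 ha
        have := he a
        omega
      have ha1 : a ∈ e.erase a := by
        rw [← Multiset.count_pos, Multiset.count_erase_self]; omega
      set e' := (e.erase a).erase a with he'def
      have hee : a ::ₘ a ::ₘ e' = e := by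
        rw [he'def, Multiset.cons_erase ha1, Multiset.cons_erase ha]
      have hcount : ∀ b, e'.count b % 2 = 0 := by
        intro b
        rcases eq_or_ne b a with rfl | hb
        · rw [he'def, Multiset.count_erase_self, Multiset.count_erase_self]
          have := he b; omega
        · rw [he'def, Multiset.count_erase_of_ne hb, Multiset.count_erase_of_ne hb]
          exact he b
      have hlt : e' < e := by
        rw [← hee]
        exact lt_of_le_of_lt (Multiset.le_cons_self _ _)
          (Multiset.lt_cons_self _ _)
      obtain ⟨u, hu⟩ := ih e' hlt hcount
      refine ⟨a ::ₘ u, ?_⟩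
      rw [← hee, hu]
      ext b
      simp only [Multiset.count_cons, Multiset.count_add]
      split <;> omega

lemma even_sum_of_even {u : Multiset ℕ} (hu : ∀ x ∈ u, x % 2 = 0) : u.sum % 2 = 0 := by
  induction u using Multiset.induction_on with
  | empty => simp
  | cons a s ih =>
    rw [Multiset.sum_cons]
    have h1 := hu a (Multiset.mem_cons_self a s)
    have h2 := ih (fun x hx => hu x (Multiset.mem_cons_of_mem hx))
    omega

end Step1
namespace Step1

/-- sum of even parts, divided by 4 -/
def phi {n : ℕ} (p : n.Partition) : ℕ := ((p.parts.filter (fun x => ¬ x % 2 = 1)).sum) / 4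

/-- partitions into distinct odd parts -/
def OD (a : ℕ) : Finset (a.Partition) :=
  Finset.univ.filter fun q => (∀ x ∈ q.parts, x % 2 = 1) ∧ q.parts.Nodup

lemma mem_OD {a : ℕ} {q : a.Partition} :
    q ∈ OD a ↔ (∀ x ∈ q.parts, x % 2 = 1) ∧ q.parts.Nodup := by simp [OD]

lemma mem_odds {t : ℕ} {q : t.Partition} :
    q ∈ Nat.Partition.odds t ↔ ∀ x ∈ q.parts, x % 2 = 1 := by
  rw [Nat.Partition.odds, Nat.Partition.restricted, Finset.mem_filter]
  simp only [Finset.mem_univ, true_and, Nat.not_even_iff]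

lemma mem_distincts {t : ℕ} {q : t.Partition} :
    q ∈ Nat.Partition.distincts t ↔ q.parts.Nodup := by
  rw [Nat.Partition.distincts, Finset.mem_filter]
  simp

def combF {a t n : ℕ} (h : a + 4 * t = n) (p₁ : a.Partition) (p₂ : t.Partition) :
    n.Partition where
  parts := p₁.parts + (p₂.parts.map (fun y => 2 * y) + p₂.parts.map (fun y => 2 * y))
  parts_pos := by
    intro x hx
    rcases Multiset.mem_add.1 hx with hx | hx
    · exact p₁.parts_pos hx
    · rcases Multiset.mem_add.1 hx with hx | hx <;>
      · obtain ⟨y, hy, rfl⟩ := Multiset.mem_map.1 hx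
        have := p₂.parts_pos hy
        omega
  parts_sum := by
    rw [Multiset.sum_add, Multiset.sum_add, sum_map_mul, p₁.parts_sum, p₂.parts_sum]
    omega

lemma combF_count_odd {a t n : ℕ} (h : a + 4 * t = n) (p₁ : a.Partition) (p₂ : t.Partition)
    (k : ℕ) (hk : k % 2 = 1) : (combF h p₁ p₂).parts.count k = p₁.parts.count k := by
  show (p₁.parts + (p₂.parts.map (fun y => 2 * y) + p₂.parts.map (fun y => 2 * y))).count k = _
  rw [Multiset.count_add, Multiset.count_add, count_map_two_odd _ _ hk]
  omega

lemma count_map_two_even (w : Multiset ℕ) (j : ℕ) (hj : j % 2 = 0) :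
    (w.map (fun y => 2 * y)).count j = w.count (j / 2) := by
  have := count_map_two w (j / 2)
  rwa [show 2 * (j / 2) = j by omega] at this

lemma combF_count_two {a t n : ℕ} (h : a + 4 * t = n) (p₁ : a.Partition) (p₂ : t.Partition)
    (hodd₁ : ∀ x ∈ p₁.parts, x % 2 = 1) (j : ℕ) (hj : j % 2 = 0) :
    (combF h p₁ p₂).parts.count j = 2 * p₂.parts.count (j / 2) := by
  show (p₁.parts + (p₂.parts.map (fun y => 2 * y) + p₂.parts.map (fun y => 2 * y))).count j = _
  rw [Multiset.count_add, Multiset.count_add, count_odd_multiset hodd₁ j hj,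
    count_map_two_even _ _ hj]
  omega

lemma combF_mem {n t : ℕ} (h4 : 4 * t ≤ n) (hsum : (n - 4 * t) + 4 * t = n)
    (p₁ : (n - 4*t).Partition) (p₂ : t.Partition)
    (h₁ : p₁ ∈ OD (n - 4*t)) (h₂ : p₂ ∈ Nat.Partition.odds t) :
    combF hsum p₁ p₂ ∈ (Fx n).filter fun p => phi p = t := by
  obtain ⟨hodd₁, hnd₁⟩ := mem_OD.1 h₁
  have hodd₂ := mem_odds.1 h₂
  have hreg : ∀ x ∈ (combF hsum p₁ p₂).parts, ¬ (4 ∣ x) := by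
    intro x hx
    rcases Multiset.mem_add.1 hx with hx | hx
    · have := hodd₁ x hx
      rintro ⟨c, hc⟩; omega
    · rcases Multiset.mem_add.1 hx with hx | hx <;>
      · obtain ⟨y, hy, rfl⟩ := Multiset.mem_map.1 hx
        have := hodd₂ y hy
        rintro ⟨c, hc⟩; omega
  rw [Finset.mem_filter]
  constructor
  · rw [Fx, Finset.mem_filter]
    refine ⟨mem_R.2 hreg, ?_⟩
    rw [isfixed_iff hreg]
    rintro ⟨j, hjodd, hj⟩
    rcases hj with hj | hj
    · rw [combF_count_odd hsum p₁ p₂ j hjodd] at hj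
      have := Multiset.nodup_iff_count_le_one.1 hnd₁ j
      omega
    · rw [combF_count_two hsum p₁ p₂ hodd₁ (2*j) (by omega)] at hj
      omega
  · show ((((combF hsum p₁ p₂).parts).filter (fun x => ¬ x % 2 = 1)).sum) / 4 = t
    have hfil : ((combF hsum p₁ p₂).parts).filter (fun x => ¬ x % 2 = 1) =
        p₂.parts.map (fun y => 2 * y) + p₂.parts.map (fun y => 2 * y) := by
      show (p₁.parts + (p₂.parts.map (fun y => 2 * y) + p₂.parts.map (fun y => 2 * y))).filter _ = _
      rw [Multiset.filter_add]
      rw [Multiset.filter_eq_nil.2 (by intro a ha; have := hodd₁ a ha; omega)]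
      rw [Multiset.filter_eq_self.2 ?_, zero_add]
      intro a ha
      rcases Multiset.mem_add.1 ha with ha | ha <;>
      · obtain ⟨y, hy, rfl⟩ := Multiset.mem_map.1 ha
        omega
    rw [hfil, Multiset.sum_add, sum_map_mul, p₂.parts_sum]
    omega

lemma fiberF_card {n t : ℕ} (h4 : 4 * t ≤ n) :
    ((Fx n).filter fun p => phi p = t).card = (OD (n - 4*t)).card * (Nat.Partition.odds t).card := by
  have hsum : (n - 4 * t) + 4 * t = n := by omega
  rw [← Finset.card_product]
  apply Eq.symm
  apply Finset.card_bij (fun pq _ => combF hsum pq.1 pq.2)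
  · rintro ⟨p₁, p₂⟩ hpq
    rw [Finset.mem_product] at hpq
    exact combF_mem h4 hsum p₁ p₂ hpq.1 hpq.2
  · rintro ⟨p₁, p₂⟩ h₁ ⟨q₁, q₂⟩ h₂ heq
    rw [Finset.mem_product] at h₁ h₂
    have heq' := congrArg Nat.Partition.parts heq
    have hodd₂ := mem_odds.1 h₁.2
    have hodd₂' := mem_odds.1 h₂.2
    have e1 : p₁ = q₁ := by
      apply Nat.Partition.ext
      ext k
      rcases Nat.even_or_odd k with hk | hk
      · rw [count_odd_multiset (mem_OD.1 h₁.1).1 k (Nat.even_iff.1 hk),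
          count_odd_multiset (mem_OD.1 h₂.1).1 k (Nat.even_iff.1 hk)]
      · have hk1 : k % 2 = 1 := Nat.odd_iff.1 hk
        rw [← combF_count_odd hsum p₁ p₂ k hk1, ← combF_count_odd hsum q₁ q₂ k hk1, heq']
    have e2 : p₂ = q₂ := by
      apply Nat.Partition.ext
      ext k
      rcases Nat.even_or_odd k with hk | hk
      · rw [count_odd_multiset hodd₂ k (Nat.even_iff.1 hk),
          count_odd_multiset hodd₂' k (Nat.even_iff.1 hk)]
      · have hk1 : k % 2 = 1 := Nat.odd_iff.1 hk
        have c1 := combF_count_two hsum p₁ p₂ (mem_OD.1 h₁.1).1 (2*k) (by omega)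
        have c2 := combF_count_two hsum q₁ q₂ (mem_OD.1 h₂.1).1 (2*k) (by omega)
        rw [heq'] at c1
        have h2 : 2 * k / 2 = k := by omega
        rw [h2] at c1 c2
        have c3 : 2 * Multiset.count k p₂.parts = 2 * Multiset.count k q₂.parts :=
          c1.symm.trans c2
        omega
    rw [e1, e2]
  · intro p hp
    rw [Finset.mem_filter] at hp
    have hpFx := hp.1
    rw [Fx, Finset.mem_filter] at hpFx
    have hreg : ∀ x ∈ p.parts, ¬ (4 ∣ x) := mem_R.1 hpFx.1
    have hfix := hpFx.2
    have hnb := (isfixed_iff hreg).1 hfix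
    set e := p.parts.filter (fun x => ¬ x % 2 = 1) with hedef
    set o := p.parts.filter (fun x => x % 2 = 1) with hodef
    have hoe : o + e = p.parts := Multiset.filter_add_not _ _
    -- every count in e is even
    have hecount : ∀ b, e.count b % 2 = 0 := by
      intro b
      rw [hedef, Multiset.count_filter]
      split
      · rename_i hb
        by_cases hbm : b ∈ p.parts
        · have h4b : b % 4 ≠ 0 := fun hc => hreg b hbm (Nat.dvd_of_mod_eq_zero hc)
          have hb2 : (b / 2) % 2 = 1 := by omega
          have := (fixed_count hnb (b / 2) hb2).2
          have hb2' : 2 * (b / 2) = b := by omega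
          rw [hb2'] at this
          exact this
        · rw [Multiset.count_eq_zero_of_notMem hbm]
      · rfl
    obtain ⟨u, hu⟩ := exists_half e hecount
    have hueven : ∀ x ∈ u, x % 2 = 0 := by
      intro x hx
      have hxe : x ∈ e := by rw [hu]; exact Multiset.mem_add.2 (Or.inl hx)
      rw [hedef] at hxe
      have := (Multiset.mem_filter.1 hxe).2
      omega
    have huelt : ∀ x ∈ u, x ∈ p.parts := by
      intro x hx
      have hxe : x ∈ e := by rw [hu]; exact Multiset.mem_add.2 (Or.inl hx)
      exact Multiset.mem_of_mem_filter hxe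
    -- u = (u.map (·/2)).map (2 * ·)
    have humap : (u.map (fun y => y / 2)).map (fun y => 2 * y) = u := by
      rw [Multiset.map_map]
      have : ∀ x ∈ u, (fun y => 2 * y) ((fun y => y / 2) x) = x := by
        intro x hx
        have := hueven x hx
        simp only [Function.comp]
        omega
      calc u.map ((fun y => 2 * y) ∘ (fun y => y / 2)) = u.map id := Multiset.map_congr rfl this
      _ = u := Multiset.map_id u
    -- sum facts
    have h2 : e.sum = u.sum + u.sum := by rw [hu, Multiset.sum_add]
    have h3 : u.sum % 2 = 0 := even_sum_of_even hueven
    have hphi : phi p = e.sum / 4 := rfl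
    have ht := hp.2
    have hesum : e.sum = 4 * t := by omega
    have husum : u.sum = 2 * t := by omega
    have hmapsum : (u.map (fun y => y / 2)).sum = t := by
      have := congrArg Multiset.sum humap
      rw [sum_map_mul] at this
      omega
    have hosum : o.sum = n - 4 * t := by
      have := congrArg Multiset.sum hoe
      rw [Multiset.sum_add, p.parts_sum] at this
      omega
    have h4t : 4 * t ≤ n := by
      have := congrArg Multiset.sum hoe
      rw [Multiset.sum_add, p.parts_sum] at this
      omega
    refine ⟨(⟨o, ?_, hosum⟩, ⟨u.map (fun y => y / 2), ?_, hmapsum⟩),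
      Finset.mem_product.2 ⟨?_, ?_⟩, ?_⟩
    · intro x hx
      exact p.parts_pos (Multiset.mem_of_mem_filter hx)
    · intro x hx
      obtain ⟨y, hy, rfl⟩ := Multiset.mem_map.1 hx
      have h5 := p.parts_pos (huelt y hy)
      have h6 := hueven y hy
      omega
    · rw [mem_OD]
      constructor
      · intro x hx
        exact (Multiset.mem_filter.1 hx).2
      · rw [Multiset.nodup_iff_count_le_one]
        intro k
        show Multiset.count k o ≤ 1
        rw [hodef, Multiset.count_filter]
        split
        · rename_i hk
          exact (fixed_count hnb k hk).1
        · omega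
    · rw [mem_odds]
      intro x hx
      obtain ⟨y, hy, rfl⟩ := Multiset.mem_map.1 hx
      have h5 := hueven y hy
      have h6 : ¬ (4 ∣ y) := hreg y (huelt y hy)
      have h7 : y % 4 ≠ 0 := fun hc => h6 (Nat.dvd_of_mod_eq_zero hc)
      omega
    · apply Nat.Partition.ext
      show o + ((u.map (fun y => y / 2)).map (fun y => 2 * y) +
        (u.map (fun y => y / 2)).map (fun y => 2 * y)) = p.parts
      rw [humap, ← hu, hoe]

end Step1
namespace Step1

lemma mem_D {n : ℕ} {p : n.Partition} :
    p ∈ D n ↔ p.parts.Nodup ∧ ∀ x ∈ p.parts, x % 4 ≠ 2 := by simp [D]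

lemma count_map_four_even (w : Multiset ℕ) (j : ℕ) (hj : j % 4 = 0) :
    (w.map (fun y => 4 * y)).count j = w.count (j / 4) := by
  have := count_map_four w (j / 4)
  rwa [show 4 * (j / 4) = j by omega] at this

def combD {a t n : ℕ} (h : a + 4 * t = n) (p₁ : a.Partition) (p₂ : t.Partition) :
    n.Partition where
  parts := p₁.parts + p₂.parts.map (fun y => 4 * y)
  parts_pos := by
    intro x hx
    rcases Multiset.mem_add.1 hx with hx | hx
    · exact p₁.parts_pos hx
    · obtain ⟨y, hy, rfl⟩ := Multiset.mem_map.1 hx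
      have := p₂.parts_pos hy
      omega
  parts_sum := by
    rw [Multiset.sum_add, sum_map_mul, p₁.parts_sum, p₂.parts_sum]
    omega

lemma combD_count_odd {a t n : ℕ} (h : a + 4 * t = n) (p₁ : a.Partition) (p₂ : t.Partition)
    (k : ℕ) (hk : k % 2 = 1) : (combD h p₁ p₂).parts.count k = p₁.parts.count k := by
  show (p₁.parts + p₂.parts.map (fun y => 4 * y)).count k = _
  rw [Multiset.count_add, count_map_four_odd _ _ hk, add_zero]

lemma combD_count_four {a t n : ℕ} (h : a + 4 * t = n) (p₁ : a.Partition) (p₂ : t.Partition)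
    (hodd₁ : ∀ x ∈ p₁.parts, x % 2 = 1) (j : ℕ) (hj : j % 4 = 0) :
    (combD h p₁ p₂).parts.count j = p₂.parts.count (j / 4) := by
  show (p₁.parts + p₂.parts.map (fun y => 4 * y)).count j = _
  rw [Multiset.count_add, count_odd_multiset hodd₁ j (by omega),
    count_map_four_even _ _ hj, zero_add]

lemma combD_mem {n t : ℕ} (hsum : (n - 4 * t) + 4 * t = n)
    (p₁ : (n - 4*t).Partition) (p₂ : t.Partition)
    (h₁ : p₁ ∈ OD (n - 4*t)) (h₂ : p₂ ∈ Nat.Partition.distincts t) :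
    combD hsum p₁ p₂ ∈ (D n).filter fun p => phi p = t := by
  obtain ⟨hodd₁, hnd₁⟩ := mem_OD.1 h₁
  have hnd₂ := mem_distincts.1 h₂
  rw [Finset.mem_filter]
  refine ⟨mem_D.2 ⟨?_, ?_⟩, ?_⟩
  · show (p₁.parts + p₂.parts.map (fun y => 4 * y)).Nodup
    rw [Multiset.nodup_add]
    refine ⟨hnd₁, hnd₂.map four_mul_inj, ?_⟩
    rw [Multiset.disjoint_left]
    intro x hx hx'
    obtain ⟨y, hy, rfl⟩ := Multiset.mem_map.1 hx'
    have := hodd₁ _ hx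
    omega
  · intro x hx
    rcases Multiset.mem_add.1 hx with hx | hx
    · have := hodd₁ x hx; omega
    · obtain ⟨y, hy, rfl⟩ := Multiset.mem_map.1 hx
      omega
  · show ((((combD hsum p₁ p₂).parts).filter (fun x => ¬ x % 2 = 1)).sum) / 4 = t
    have hfil : ((combD hsum p₁ p₂).parts).filter (fun x => ¬ x % 2 = 1) =
        p₂.parts.map (fun y => 4 * y) := by
      show (p₁.parts + p₂.parts.map (fun y => 4 * y)).filter _ = _
      rw [Multiset.filter_add]
      rw [Multiset.filter_eq_nil.2 (by intro a ha; have := hodd₁ a ha; omega)]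
      rw [Multiset.filter_eq_self.2 ?_, zero_add]
      intro a ha
      obtain ⟨y, hy, rfl⟩ := Multiset.mem_map.1 ha
      omega
    rw [hfil, sum_map_mul, p₂.parts_sum]
    omega

lemma fiberD_card {n t : ℕ} (h4 : 4 * t ≤ n) :
    ((D n).filter fun p => phi p = t).card =
      (OD (n - 4*t)).card * (Nat.Partition.distincts t).card := by
  have hsum : (n - 4 * t) + 4 * t = n := by omega
  rw [← Finset.card_product]
  apply Eq.symm
  apply Finset.card_bij (fun pq _ => combD hsum pq.1 pq.2)
  · rintro ⟨p₁, p₂⟩ hpq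
    rw [Finset.mem_product] at hpq
    exact combD_mem hsum p₁ p₂ hpq.1 hpq.2
  · rintro ⟨p₁, p₂⟩ h₁ ⟨q₁, q₂⟩ h₂ heq
    rw [Finset.mem_product] at h₁ h₂
    have heq' := congrArg Nat.Partition.parts heq
    have e1 : p₁ = q₁ := by
      apply Nat.Partition.ext
      ext k
      rcases Nat.even_or_odd k with hk | hk
      · rw [count_odd_multiset (mem_OD.1 h₁.1).1 k (Nat.even_iff.1 hk),
          count_odd_multiset (mem_OD.1 h₂.1).1 k (Nat.even_iff.1 hk)]
      · have hk1 : k % 2 = 1 := Nat.odd_iff.1 hk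
        rw [← combD_count_odd hsum p₁ p₂ k hk1, ← combD_count_odd hsum q₁ q₂ k hk1, heq']
    have e2 : p₂ = q₂ := by
      apply Nat.Partition.ext
      ext k
      have c1 := combD_count_four hsum p₁ p₂ (mem_OD.1 h₁.1).1 (4*k) (by omega)
      have c2 := combD_count_four hsum q₁ q₂ (mem_OD.1 h₂.1).1 (4*k) (by omega)
      rw [heq'] at c1
      have h2 : 4 * k / 4 = k := by omega
      rw [h2] at c1 c2
      exact c1.symm.trans c2
    rw [e1, e2]
  · intro p hp
    rw [Finset.mem_filter] at hp
    obtain ⟨hnd, h42⟩ := mem_D.1 hp.1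
    set e := p.parts.filter (fun x => ¬ x % 2 = 1) with hedef
    set o := p.parts.filter (fun x => x % 2 = 1) with hodef
    have hoe : o + e = p.parts := Multiset.filter_add_not _ _
    have helt : ∀ x ∈ e, x % 4 = 0 := by
      intro x hx
      have hx1 := Multiset.mem_filter.1 hx
      have := h42 x hx1.1
      have := hx1.2
      omega
    have hediv : 4 ∣ e.sum := Multiset.dvd_sum (by
      intro x hx
      exact Nat.dvd_of_mod_eq_zero (helt x hx))
    have ht := hp.2
    have hphi : phi p = e.sum / 4 := rfl
    have hesum : e.sum = 4 * t := by omega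
    -- e = (e.map (·/4)).map (4*·)
    have hemap : (e.map (fun y => y / 4)).map (fun y => 4 * y) = e := by
      rw [Multiset.map_map]
      have : ∀ x ∈ e, ((fun y => 4 * y) ∘ (fun y => y / 4)) x = id x := by
        intro x hx
        have := helt x hx
        simp only [Function.comp, id]
        omega
      rw [Multiset.map_congr rfl this, Multiset.map_id]
    have hmapsum : (e.map (fun y => y / 4)).sum = t := by
      have := congrArg Multiset.sum hemap
      rw [sum_map_mul] at this
      omega
    have hosum : o.sum = n - 4 * t := by
      have := congrArg Multiset.sum hoe
      rw [Multiset.sum_add, p.parts_sum] at this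
      omega
    have hne : (o + e).Nodup := by rw [hoe]; exact hnd
    rw [Multiset.nodup_add] at hne
    refine ⟨(⟨o, ?_, hosum⟩, ⟨e.map (fun y => y / 4), ?_, hmapsum⟩),
      Finset.mem_product.2 ⟨?_, ?_⟩, ?_⟩
    · intro x hx
      exact p.parts_pos (Multiset.mem_of_mem_filter hx)
    · intro x hx
      obtain ⟨y, hy, rfl⟩ := Multiset.mem_map.1 hx
      have h5 := p.parts_pos (Multiset.mem_of_mem_filter hy)
      have h6 := helt y hy
      omega
    · rw [mem_OD]
      exact ⟨fun x hx => (Multiset.mem_filter.1 hx).2, hne.1⟩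
    · rw [mem_distincts]
      apply Multiset.Nodup.map_on ?_ hne.2.1
      intro x hx y hy hxy
      have h5 := helt x hx
      have h6 := helt y hy
      omega
    · apply Nat.Partition.ext
      show o + (e.map (fun y => y / 4)).map (fun y => 4 * y) = p.parts
      rw [hemap, hoe]

end Step1
namespace Step1

lemma card_sub (n : ℕ) :
    (b4E n : ℤ) - b4O n = ∑ p ∈ R n, (-1 : ℤ) ^ (Multiset.card p.parts) := by
  have hE : b4E n = ((R n).filter fun p => Even (Multiset.card p.parts)).card := by
    rw [b4E, Nat.card_eq_fintype_card, Fintype.card_subtype, R, Finset.filter_filter]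
    congr 1; ext p; simp [and_comm]
  have hO : b4O n = ((R n).filter fun p => ¬ Even (Multiset.card p.parts)).card := by
    rw [b4O, Nat.card_eq_fintype_card, Fintype.card_subtype, R, Finset.filter_filter]
    congr 1; ext p; simp [and_comm, Nat.not_even_iff_odd]
  rw [hE, hO, ← Finset.sum_filter_add_sum_filter_not (R n)
    (fun p => Even (Multiset.card p.parts)) (fun p => (-1 : ℤ) ^ (Multiset.card p.parts))]
  rw [Finset.sum_congr rfl (fun p hp => (Finset.mem_filter.1 hp).2.neg_one_pow),
      Finset.sum_congr rfl (fun p hp =>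
        Odd.neg_one_pow (Nat.not_even_iff_odd.1 (Finset.mem_filter.1 hp).2))]
  simp only [Finset.sum_const, nsmul_eq_mul, mul_one, mul_neg_one]
  push_cast
  ring

lemma Q2_eq (n : ℕ) : Q2 n = (D n).card := by
  rw [Q2, Nat.card_eq_fintype_card, Fintype.card_subtype]; rfl


end Step1

namespace Step1

lemma evensum_le {n : ℕ} (p : n.Partition) :
    (p.parts.filter fun x => ¬ x % 2 = 1).sum ≤ n := by
  have := congrArg Multiset.sum (Multiset.filter_add_not (fun x => x % 2 = 1) p.parts)
  rw [Multiset.sum_add, p.parts_sum] at this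
  omega

lemma phi_mem_range {n : ℕ} (p : n.Partition) : phi p ∈ Finset.range (n + 1) := by
  have := evensum_le p
  rw [Finset.mem_range, phi]
  omega

lemma Fx_card_eq_D_card (n : ℕ) : (Fx n).card = (D n).card := by
  rw [Finset.card_eq_sum_card_fiberwise (fun p (_ : p ∈ Fx n) => phi_mem_range p),
      Finset.card_eq_sum_card_fiberwise (fun p (_ : p ∈ D n) => phi_mem_range p)]
  apply Finset.sum_congr rfl
  intro t _
  by_cases h4 : 4 * t ≤ n
  · rw [fiberF_card h4, fiberD_card h4, Theorems100.partition_theorem t]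
  · have hF : (Fx n).filter (fun p => phi p = t) = ∅ := by
      rw [Finset.filter_eq_empty_iff]
      intro p _ hp
      have h1 := evensum_le p
      have h2 : 4 * phi p ≤ n := by rw [phi]; omega
      omega
    have hD : (D n).filter (fun p => phi p = t) = ∅ := by
      rw [Finset.filter_eq_empty_iff]
      intro p _ hp
      have h1 := evensum_le p
      have h2 : 4 * phi p ≤ n := by rw [phi]; omega
      omega
    rw [hF, hD]

end Step1

theorem stmt_1 (n : ℕ) : (-1 : ℤ) ^ n * Q2 n = (b4E n : ℤ) - b4O n := by
  rw [Step1.card_sub, Step1.sum_R_eq, Step1.Q2_eq, Step1.Fx_card_eq_D_card]
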